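/- Let C be a coalgebra over a field that is left artinian (C is an artinian left C-comodule) and right semiperfect (every indecomposable injective left C-comodule is finite dimensional). Then C is finite dimensional. -/

import Mathlib

open TensorProduct CategoryTheory

noncomputable section

universe u

variable (k : Type u) [Field k]
variable (C : Type u) [AddCommGroup C] [Module k C] [Coalgebra k C]

/-- A (bundled) left `C`-comodule. -/
structure LeftComod where
  V : Type u
  [addCommGroup : AddCommGroup V]
  [module : Module k V]
  ρ : V →ₗ[k] C ⊗[k] V
  coassoc : (TensorProduct.assoc k C C V).toLinearMap ∘ₗ
      LinearMap.rTensor V (Coalgebra.comul (R := k) (A := C)) ∘ₗ ρ =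
    LinearMap.lTensor C ρ ∘ₗ ρ
  counit_comp : (TensorProduct.lid k V).toLinearMap ∘ₗ
      LinearMap.rTensor V (Coalgebra.counit (R := k) (A := C)) ∘ₗ ρ = LinearMap.id

attribute [instance] LeftComod.addCommGroup LeftComod.module

variable {k C}

/-- Morphisms of left `C`-comodules. -/
@[ext]
structure ComodHom (X Y : LeftComod k C) where
  f : X.V →ₗ[k] Y.V
  comm : Y.ρ ∘ₗ f = LinearMap.lTensor C f ∘ₗ X.ρ

/-- The category of left `C`-comodules. -/
instance : Category (LeftComod k C) where
  Hom := ComodHom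
  id X := ⟨LinearMap.id, by rw [LinearMap.lTensor_id, LinearMap.comp_id, LinearMap.id_comp]⟩
  comp {X Y Z} u v := ⟨v.f ∘ₗ u.f, by
    rw [← LinearMap.comp_assoc, v.comm, LinearMap.comp_assoc, u.comm,
      ← LinearMap.comp_assoc, ← LinearMap.lTensor_comp]⟩
  id_comp u := ComodHom.ext (LinearMap.comp_id _)
  comp_id u := ComodHom.ext (LinearMap.id_comp _)
  assoc u v w := ComodHom.ext (LinearMap.comp_assoc _ _ _).symm

variable (k C)

/-- A subspace `V ⊆ C` is a left subcomodule of `C` (with coaction `Δ`):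
`Δ(V) ⊆ C ⊗ V`. -/
def IsLeftSubcomoduleOfC (V : Submodule k C) : Prop :=
  ∀ v ∈ V, Coalgebra.comul (R := k) v ∈
    LinearMap.range (LinearMap.lTensor C V.subtype)

variable {k C}

/-- An indecomposable comodule: nonzero, and the only idempotent endomorphisms are
`0` and the identity. -/
def Indecomposable (Q : LeftComod k C) : Prop :=
  Nontrivial Q.V ∧ ∀ e : Q ⟶ Q, e ≫ e = e → e = 𝟙 Q ∨ e.f = 0

namespace Statement19

open LinearMap

@[simp] lemma comp_f {X Y Z : LeftComod k C} (u : X ⟶ Y) (v : Y ⟶ Z) :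
    (u ≫ v).f = v.f ∘ₗ u.f := rfl

@[simp] lemma id_f (X : LeftComod k C) : (𝟙 X : X ⟶ X).f = LinearMap.id := rfl

variable (k C) in
/-- `C` as a left comodule over itself. -/
def Ccomod : LeftComod k C where
  V := C
  ρ := Coalgebra.comul
  coassoc := Coalgebra.coassoc
  counit_comp := by
    ext c
    simp

lemma cancel_comp {A B D : Type u} [AddCommGroup A] [Module k A] [AddCommGroup B] [Module k B]
    [AddCommGroup D] [Module k D] {j : B →ₗ[k] D} (hj : Function.Injective j)
    {f g : A →ₗ[k] B} (h : j ∘ₗ f = j ∘ₗ g) : f = g := by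
  ext a
  exact hj (LinearMap.congr_fun h a)

/-- A subcomodule of a comodule `X`. -/
def IsSubcomod (X : LeftComod k C) (U : Submodule k X.V) : Prop :=
  ∀ u ∈ U, X.ρ u ∈ LinearMap.range (LinearMap.lTensor C U.subtype)

lemma lTensor_subtype_injective {M : Type u} [AddCommGroup M] [Module k M]
    (U : Submodule k M) : Function.Injective (lTensor C U.subtype) :=
  Module.Flat.lTensor_preserves_injective_linearMap U.subtype U.injective_subtype

/-- The coaction on a subcomodule. -/
def subρ (X : LeftComod k C) (U : Submodule k X.V) (h : IsSubcomod X U) :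
    U →ₗ[k] C ⊗[k] U :=
  (LinearEquiv.ofInjective (lTensor C U.subtype)
      (lTensor_subtype_injective U)).symm.toLinearMap ∘ₗ
    LinearMap.codRestrict (LinearMap.range (lTensor C U.subtype)) (X.ρ ∘ₗ U.subtype)
      (fun u => h u.1 u.2)

lemma subρ_spec (X : LeftComod k C) (U : Submodule k X.V) (h : IsSubcomod X U) :
    lTensor C U.subtype ∘ₗ subρ X U h = X.ρ ∘ₗ U.subtype := by
  ext u
  set e := LinearEquiv.ofInjective (lTensor C U.subtype) (lTensor_subtype_injective U)
  have key : ∀ y : LinearMap.range (lTensor C U.subtype),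
      lTensor C U.subtype (e.symm y) = (y : C ⊗[k] X.V) := by
    intro y
    have h1 := e.apply_symm_apply y
    have h2 : ((e (e.symm y)) : C ⊗[k] X.V) = lTensor C U.subtype (e.symm y) := by
      simp [e, LinearEquiv.ofInjective_apply]
    rw [← h2, h1]
  simp [subρ]
  rfl


lemma assoc_nat {M N : Type u} [AddCommGroup M] [Module k M] [AddCommGroup N] [Module k N]
    (f : M →ₗ[k] N) :
    (TensorProduct.assoc k C C N).toLinearMap ∘ₗ lTensor (C ⊗[k] C) f =
      lTensor C (lTensor C f) ∘ₗ (TensorProduct.assoc k C C M).toLinearMap := by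
  apply TensorProduct.ext_threefold
  intro x y z
  simp

lemma lid_nat {M N : Type u} [AddCommGroup M] [Module k M] [AddCommGroup N] [Module k N]
    (f : M →ₗ[k] N) :
    f ∘ₗ (TensorProduct.lid k M).toLinearMap =
      (TensorProduct.lid k N).toLinearMap ∘ₗ lTensor k f := by
  apply TensorProduct.ext'
  intro a m
  simp

lemma rid_nat {M N : Type u} [AddCommGroup M] [Module k M] [AddCommGroup N] [Module k N]
    (f : M →ₗ[k] N) :
    f ∘ₗ (TensorProduct.rid k M).toLinearMap =
      (TensorProduct.rid k N).toLinearMap ∘ₗ rTensor k f := by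
  apply TensorProduct.ext'
  intro m a
  simp

set_option maxHeartbeats 2000000 in
/-- The subcomodule `U` of `X`, as a bundled comodule. -/
def sub (X : LeftComod k C) (U : Submodule k X.V) (h : IsSubcomod X U) : LeftComod k C where
  V := U
  ρ := subρ X U h
  coassoc := by
    have hspec := subρ_spec X U h
    apply cancel_comp (j := lTensor C (lTensor C U.subtype))
      (Module.Flat.lTensor_preserves_injective_linearMap _ (lTensor_subtype_injective U))
    have e1 : lTensor C (lTensor C U.subtype) ∘ₗ (lTensor C (subρ X U h) ∘ₗ subρ X U h)
        = lTensor C X.ρ ∘ₗ X.ρ ∘ₗ U.subtype := by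
      rw [← LinearMap.comp_assoc, ← lTensor_comp, hspec, lTensor_comp, LinearMap.comp_assoc,
        hspec]
    have e2 : lTensor C (lTensor C U.subtype) ∘ₗ ((TensorProduct.assoc k C C (↥U)).toLinearMap ∘ₗ
          rTensor (↥U) (Coalgebra.comul (R := k) (A := C)) ∘ₗ subρ X U h)
        = (TensorProduct.assoc k C C X.V).toLinearMap ∘ₗ
            rTensor X.V (Coalgebra.comul (R := k) (A := C)) ∘ₗ X.ρ ∘ₗ U.subtype := by
      have h1 : lTensor C (lTensor C U.subtype) ∘ₗ (TensorProduct.assoc k C C (↥U)).toLinearMap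
          = (TensorProduct.assoc k C C X.V).toLinearMap ∘ₗ lTensor (C ⊗[k] C) U.subtype :=
        (assoc_nat U.subtype).symm
      have h2 : lTensor (C ⊗[k] C) U.subtype ∘ₗ
            rTensor (↥U) (Coalgebra.comul (R := k) (A := C))
          = rTensor X.V (Coalgebra.comul (R := k) (A := C)) ∘ₗ lTensor C U.subtype := by
        rw [lTensor_comp_rTensor, rTensor_comp_lTensor]
      rw [← LinearMap.comp_assoc, h1, LinearMap.comp_assoc]
      congr 1
      rw [← LinearMap.comp_assoc, h2, LinearMap.comp_assoc, hspec]
    have e3 : (TensorProduct.assoc k C C X.V).toLinearMap ∘ₗ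
          rTensor X.V (Coalgebra.comul (R := k) (A := C)) ∘ₗ X.ρ ∘ₗ U.subtype
        = lTensor C X.ρ ∘ₗ X.ρ ∘ₗ U.subtype := by
      have := congrArg (fun F : X.V →ₗ[k] C ⊗[k] (C ⊗[k] X.V) => F ∘ₗ U.subtype) X.coassoc
      simpa only [LinearMap.comp_assoc] using this
    rw [e1, e2, e3]
  counit_comp := by
    have hspec := subρ_spec X U h
    apply cancel_comp (j := U.subtype) U.injective_subtype
    rw [LinearMap.comp_id]
    have h1 : U.subtype ∘ₗ (TensorProduct.lid k (↥U)).toLinearMap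
        = (TensorProduct.lid k X.V).toLinearMap ∘ₗ lTensor k U.subtype := lid_nat U.subtype
    have h2 : lTensor k U.subtype ∘ₗ rTensor (↥U) (Coalgebra.counit (R := k) (A := C))
        = rTensor X.V (Coalgebra.counit (R := k) (A := C)) ∘ₗ lTensor C U.subtype := by
      rw [lTensor_comp_rTensor, rTensor_comp_lTensor]
    rw [← LinearMap.comp_assoc, h1, LinearMap.comp_assoc, ← LinearMap.comp_assoc _ _ (lTensor k U.subtype),
      h2, LinearMap.comp_assoc, hspec, ← LinearMap.comp_assoc, ← LinearMap.comp_assoc]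
    have := congrArg (fun F : X.V →ₗ[k] X.V => F ∘ₗ U.subtype) X.counit_comp
    simpa only [LinearMap.comp_assoc, LinearMap.id_comp] using this

@[simp] lemma sub_ρ (X : LeftComod k C) (U : Submodule k X.V) (h : IsSubcomod X U) :
    (sub X U h).ρ = subρ X U h := rfl

/-- Inclusion of a subcomodule. -/
def subIncl (X : LeftComod k C) (U : Submodule k X.V) (h : IsSubcomod X U) :
    sub X U h ⟶ X :=
  ⟨U.subtype, (subρ_spec X U h).symm⟩

@[simp] lemma subIncl_f (X : LeftComod k C) (U : Submodule k X.V) (h : IsSubcomod X U) :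
    (subIncl X U h).f = U.subtype := rfl

/-- Corestriction of a comodule map to a subcomodule containing its range. -/
def corestrict {X Y : LeftComod k C} (g : X ⟶ Y) (U : Submodule k Y.V) (h : IsSubcomod Y U)
    (hle : LinearMap.range g.f ≤ U) : X ⟶ sub Y U h where
  f := LinearMap.codRestrict U g.f (fun x => hle ⟨x, rfl⟩)
  comm := by
    apply cancel_comp (j := lTensor C U.subtype) (lTensor_subtype_injective U)
    have hcod : U.subtype ∘ₗ LinearMap.codRestrict U g.f (fun x => hle ⟨x, rfl⟩) = g.f :=
      LinearMap.subtype_comp_codRestrict _ _ _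
    erw [← LinearMap.comp_assoc, sub_ρ, subρ_spec, LinearMap.comp_assoc, hcod,
      ← LinearMap.comp_assoc, ← lTensor_comp, hcod, g.comm]

@[simp] lemma corestrict_f {X Y : LeftComod k C} (g : X ⟶ Y) (U : Submodule k Y.V)
    (h : IsSubcomod Y U) (hle : LinearMap.range g.f ≤ U) :
    (corestrict g U h hle).f = LinearMap.codRestrict U g.f (fun x => hle ⟨x, rfl⟩) := rfl

lemma corestrict_comp_subIncl {X Y : LeftComod k C} (g : X ⟶ Y) (U : Submodule k Y.V)
    (h : IsSubcomod Y U) (hle : LinearMap.range g.f ≤ U) :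
    corestrict g U h hle ≫ subIncl Y U h = g := by
  apply ComodHom.ext
  erw [comp_f, subIncl_f, corestrict_f, LinearMap.subtype_comp_codRestrict]


/-- The zero morphism. -/
def zeroHom (X Y : LeftComod k C) : X ⟶ Y :=
  ⟨0, by rw [LinearMap.comp_zero, lTensor_zero, LinearMap.zero_comp]⟩

/-- The kernel of a comodule map is a subcomodule. -/
lemma ker_isSubcomod {X Y : LeftComod k C} (g : X ⟶ Y) :
    IsSubcomod X (LinearMap.ker g.f) := by
  intro u hu
  have hex : Function.Exact (lTensor C (LinearMap.ker g.f).subtype) (lTensor C g.f) :=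
    Module.Flat.lTensor_exact C (LinearMap.exact_subtype_ker_map g.f)
  have h0 : lTensor C g.f (X.ρ u) = 0 := by
    have := LinearMap.congr_fun g.comm u
    simp only [LinearMap.comp_apply] at this
    rw [← this, LinearMap.mem_ker.mp hu, map_zero]
  obtain ⟨z, hz⟩ := (hex _).mp h0
  exact ⟨z, hz⟩

/-- Underlying maps of monomorphisms are injective. -/
lemma mono_injective {X Y : LeftComod k C} (g : X ⟶ Y) [Mono g] :
    Function.Injective g.f := by
  rw [← LinearMap.ker_eq_bot]
  set K := LinearMap.ker g.f
  have hK : IsSubcomod X K := ker_isSubcomod g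
  have hcomp : subIncl X K hK ≫ g = zeroHom (sub X K hK) X ≫ g := by
    apply ComodHom.ext
    apply LinearMap.ext
    rintro ⟨x, hx⟩
    exact (LinearMap.mem_ker.mp hx).trans (map_zero g.f).symm
  have := (cancel_mono g).mp hcomp
  have hsub : K.subtype = (0 : (↥K) →ₗ[k] X.V) := congrArg ComodHom.f this
  ext x
  simp only [Submodule.mem_bot]
  constructor
  · intro hx
    have := LinearMap.congr_fun hsub ⟨x, hx⟩
    simpa using this
  · rintro rfl; exact (LinearMap.ker g.f).zero_mem

lemma comul_comp_rid_lTensor {M : Type u} [AddCommGroup M] [Module k M] (ψ : M →ₗ[k] k) :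
    (Coalgebra.comul (R := k) (A := C)) ∘ₗ
        ((TensorProduct.rid k C).toLinearMap ∘ₗ lTensor C ψ) =
      lTensor C ((TensorProduct.rid k C).toLinearMap ∘ₗ lTensor C ψ) ∘ₗ
        (TensorProduct.assoc k C C M).toLinearMap ∘ₗ
          rTensor M (Coalgebra.comul (R := k) (A := C)) := by
  have h1 : lTensor C ((TensorProduct.rid k C).toLinearMap ∘ₗ lTensor C ψ) ∘ₗ
        (TensorProduct.assoc k C C M).toLinearMap =
      (TensorProduct.rid k (C ⊗[k] C)).toLinearMap ∘ₗ lTensor (C ⊗[k] C) ψ := by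
    apply TensorProduct.ext_threefold
    intro x y z
    simp [TensorProduct.smul_tmul]
  have h2 : lTensor (C ⊗[k] C) ψ ∘ₗ rTensor M (Coalgebra.comul (R := k) (A := C)) =
      rTensor k (Coalgebra.comul (R := k) (A := C)) ∘ₗ lTensor C ψ := by
    rw [lTensor_comp_rTensor, rTensor_comp_lTensor]
  have h3 : (TensorProduct.rid k (C ⊗[k] C)).toLinearMap ∘ₗ
        rTensor k (Coalgebra.comul (R := k) (A := C)) =
      (Coalgebra.comul (R := k) (A := C)) ∘ₗ (TensorProduct.rid k C).toLinearMap :=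
    (rid_nat _).symm
  symm
  calc lTensor C ((TensorProduct.rid k C).toLinearMap ∘ₗ lTensor C ψ) ∘ₗ
        (TensorProduct.assoc k C C M).toLinearMap ∘ₗ
          rTensor M (Coalgebra.comul (R := k) (A := C))
      = (lTensor C ((TensorProduct.rid k C).toLinearMap ∘ₗ lTensor C ψ) ∘ₗ
          (TensorProduct.assoc k C C M).toLinearMap) ∘ₗ
            rTensor M (Coalgebra.comul (R := k) (A := C)) := by
        rw [LinearMap.comp_assoc]
    _ = ((TensorProduct.rid k (C ⊗[k] C)).toLinearMap ∘ₗ lTensor (C ⊗[k] C) ψ) ∘ₗ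
            rTensor M (Coalgebra.comul (R := k) (A := C)) := by rw [h1]
    _ = (TensorProduct.rid k (C ⊗[k] C)).toLinearMap ∘ₗ
          rTensor k (Coalgebra.comul (R := k) (A := C)) ∘ₗ lTensor C ψ := by
        rw [LinearMap.comp_assoc, h2]
    _ = (Coalgebra.comul (R := k) (A := C)) ∘ₗ
          ((TensorProduct.rid k C).toLinearMap ∘ₗ lTensor C ψ) := by
        rw [← LinearMap.comp_assoc, h3, LinearMap.comp_assoc]

/-- The comodule morphism `Y ⟶ C` induced by a linear functional on `Y`. -/
def cofreeHom (Y : LeftComod k C) (ψ : Y.V →ₗ[k] k) : Y ⟶ Ccomod k C where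
  f := (TensorProduct.rid k C).toLinearMap ∘ₗ lTensor C ψ ∘ₗ Y.ρ
  comm := by
    have key := comul_comp_rid_lTensor (C := C) ψ
    show (Coalgebra.comul (R := k) (A := C)) ∘ₗ
        ((TensorProduct.rid k C).toLinearMap ∘ₗ lTensor C ψ ∘ₗ Y.ρ) =
      lTensor C ((TensorProduct.rid k C).toLinearMap ∘ₗ lTensor C ψ ∘ₗ Y.ρ) ∘ₗ Y.ρ
    calc (Coalgebra.comul (R := k) (A := C)) ∘ₗ
          ((TensorProduct.rid k C).toLinearMap ∘ₗ lTensor C ψ ∘ₗ Y.ρ)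
        = ((Coalgebra.comul (R := k) (A := C)) ∘ₗ
            ((TensorProduct.rid k C).toLinearMap ∘ₗ lTensor C ψ)) ∘ₗ Y.ρ := by
          simp only [LinearMap.comp_assoc]
      _ = (lTensor C ((TensorProduct.rid k C).toLinearMap ∘ₗ lTensor C ψ) ∘ₗ
            (TensorProduct.assoc k C C Y.V).toLinearMap ∘ₗ
              rTensor Y.V (Coalgebra.comul (R := k) (A := C))) ∘ₗ Y.ρ := by rw [key]
      _ = lTensor C ((TensorProduct.rid k C).toLinearMap ∘ₗ lTensor C ψ) ∘ₗ
            ((TensorProduct.assoc k C C Y.V).toLinearMap ∘ₗ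
              rTensor Y.V (Coalgebra.comul (R := k) (A := C)) ∘ₗ Y.ρ) := by
          simp only [LinearMap.comp_assoc]
      _ = lTensor C ((TensorProduct.rid k C).toLinearMap ∘ₗ lTensor C ψ) ∘ₗ
            (lTensor C Y.ρ ∘ₗ Y.ρ) := by rw [Y.coassoc]
      _ = (lTensor C ((TensorProduct.rid k C).toLinearMap ∘ₗ lTensor C ψ) ∘ₗ
            lTensor C Y.ρ) ∘ₗ Y.ρ := by rw [← LinearMap.comp_assoc]
      _ = lTensor C (((TensorProduct.rid k C).toLinearMap ∘ₗ lTensor C ψ) ∘ₗ Y.ρ) ∘ₗ Y.ρ := by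
          rw [← lTensor_comp]
      _ = lTensor C ((TensorProduct.rid k C).toLinearMap ∘ₗ lTensor C ψ ∘ₗ Y.ρ) ∘ₗ Y.ρ := by
          simp only [LinearMap.comp_assoc]

@[simp] lemma cofreeHom_f (Y : LeftComod k C) (ψ : Y.V →ₗ[k] k) :
    (cofreeHom Y ψ).f = (TensorProduct.rid k C).toLinearMap ∘ₗ lTensor C ψ ∘ₗ Y.ρ := rfl

/-- `C`, as a comodule over itself, is an injective object. -/
instance : Injective (Ccomod k C) where
  factors {X Y} g f hf := by
    have hinj : Function.Injective f.f := mono_injective f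
    obtain ⟨h, hh⟩ := f.f.exists_leftInverse_of_injective (LinearMap.ker_eq_bot.mpr hinj)
    have hcomm : (Coalgebra.comul (R := k) (A := C)) ∘ₗ g.f = lTensor C g.f ∘ₗ X.ρ := g.comm
    refine ⟨cofreeHom Y (((Coalgebra.counit (R := k) (A := C)) ∘ₗ g.f) ∘ₗ h), ?_⟩
    apply ComodHom.ext
    rw [comp_f, cofreeHom_f]
    have hψf : (((Coalgebra.counit (R := k) (A := C)) ∘ₗ g.f) ∘ₗ h) ∘ₗ f.f =
        (Coalgebra.counit (R := k) (A := C)) ∘ₗ g.f := by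
      rw [LinearMap.comp_assoc, hh, LinearMap.comp_id]
    calc ((TensorProduct.rid k C).toLinearMap ∘ₗ
          lTensor C (((Coalgebra.counit (R := k) (A := C)) ∘ₗ g.f) ∘ₗ h) ∘ₗ Y.ρ) ∘ₗ f.f
        = (TensorProduct.rid k C).toLinearMap ∘ₗ
            lTensor C (((Coalgebra.counit (R := k) (A := C)) ∘ₗ g.f) ∘ₗ h) ∘ₗ (Y.ρ ∘ₗ f.f) := by
          simp only [LinearMap.comp_assoc]
      _ = (TensorProduct.rid k C).toLinearMap ∘ₗ
            lTensor C (((Coalgebra.counit (R := k) (A := C)) ∘ₗ g.f) ∘ₗ h) ∘ₗ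
              (lTensor C f.f ∘ₗ X.ρ) := by rw [f.comm]
      _ = (TensorProduct.rid k C).toLinearMap ∘ₗ
            (lTensor C (((Coalgebra.counit (R := k) (A := C)) ∘ₗ g.f) ∘ₗ h) ∘ₗ
              lTensor C f.f) ∘ₗ X.ρ := by simp only [LinearMap.comp_assoc]
      _ = (TensorProduct.rid k C).toLinearMap ∘ₗ
            lTensor C ((((Coalgebra.counit (R := k) (A := C)) ∘ₗ g.f) ∘ₗ h) ∘ₗ f.f) ∘ₗ X.ρ := by
          rw [← lTensor_comp]
      _ = (TensorProduct.rid k C).toLinearMap ∘ₗ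
            lTensor C ((Coalgebra.counit (R := k) (A := C)) ∘ₗ g.f) ∘ₗ X.ρ := by rw [hψf]
      _ = (TensorProduct.rid k C).toLinearMap ∘ₗ
            lTensor C (Coalgebra.counit (R := k) (A := C)) ∘ₗ (lTensor C g.f ∘ₗ X.ρ) := by
          erw [lTensor_comp]
          simp only [LinearMap.comp_assoc]
      _ = (TensorProduct.rid k C).toLinearMap ∘ₗ
            lTensor C (Coalgebra.counit (R := k) (A := C)) ∘ₗ
              ((Coalgebra.comul (R := k) (A := C)) ∘ₗ g.f) := by erw [← hcomm]
      _ = (show X.V →ₗ[k] C from g.f) := by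
          apply LinearMap.ext
          intro x
          show (TensorProduct.rid k C) ((lTensor C (Coalgebra.counit (R := k) (A := C)))
            (Coalgebra.comul (R := k) (A := C) (show C from g.f x))) = (show C from g.f x)
          exact (congrArg (TensorProduct.rid k C)
            (Coalgebra.lTensor_counit_comul (R := k) (show C from g.f x))).trans
            ((TensorProduct.rid_tmul _ _).trans (one_smul k _))


/-- A retract of an injective object is injective. -/
lemma injective_of_retract {P Q : LeftComod k C} [Injective Q] (i : P ⟶ Q) (r : Q ⟶ P)
    (hir : i ≫ r = 𝟙 P) : Injective P where
  factors {X Y} g f hf := by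
    obtain ⟨h', hh'⟩ := Injective.factors (g ≫ i) f
    exact ⟨h' ≫ r, by rw [← Category.assoc, hh', Category.assoc, hir, Category.comp_id]⟩

/-- The range of a comodule map into `C` is a subcomodule of `C`. -/
lemma range_isSubcomod {X : LeftComod k C} (g : X ⟶ Ccomod k C) :
    IsSubcomod (Ccomod k C) (LinearMap.range g.f) := by
  rintro c ⟨x, rfl⟩
  have hcomm : (Coalgebra.comul (R := k) (A := C)) ∘ₗ g.f = lTensor C g.f ∘ₗ X.ρ := g.comm
  have h2 : Coalgebra.comul (R := k) (A := C) (g.f x) = lTensor C g.f (X.ρ x) :=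
    LinearMap.congr_fun hcomm x
  show Coalgebra.comul (R := k) (A := C) (g.f x) ∈
    LinearMap.range (lTensor C (LinearMap.range g.f).subtype)
  have h3 : (LinearMap.range g.f).subtype ∘ₗ g.f.rangeRestrict = g.f :=
    LinearMap.subtype_comp_codRestrict _ _ _
  rw [h2, ← h3, lTensor_comp]
  exact ⟨lTensor C g.f.rangeRestrict (X.ρ x), rfl⟩

/-- Subtraction of an idempotent from the identity. -/
def idSub {Q : LeftComod k C} (e : Q ⟶ Q) : Q ⟶ Q where
  f := LinearMap.id - e.f
  comm := by
    rw [LinearMap.comp_sub, LinearMap.comp_id, lTensor_sub, lTensor_id, LinearMap.sub_comp,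
      LinearMap.id_comp, e.comm]

variable (k C) in
/-- The subtype of left subcomodules of `C`. -/
abbrev SubcomodC := {W : Submodule k C // IsSubcomod (Ccomod k C) W}

lemma wf_subcomod
    (hart : ∀ f : ℕ → Submodule k C, (∀ n, IsLeftSubcomoduleOfC k C (f n)) →
      (∀ n, f (n + 1) ≤ f n) → ∃ N, ∀ m, N ≤ m → f m = f N) :
    WellFounded ((· < ·) : SubcomodC k C → SubcomodC k C → Prop) := by
  have := (wellFoundedGT_iff_monotone_chain_condition (α := (SubcomodC k C)ᵒᵈ)).mpr ?_
  · exact this.wf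
  · intro a
    obtain ⟨N, hN⟩ := hart (fun n => (OrderDual.ofDual (a n)).val)
      (fun n => (OrderDual.ofDual (a n)).2)
      (fun n => a.monotone (Nat.le_succ n))
    refine ⟨N, fun m hm => ?_⟩
    exact (Subtype.ext (hN m hm) :
      OrderDual.ofDual (a m) = OrderDual.ofDual (a N)).symm

set_option synthInstance.maxHeartbeats 1000000 in
set_option maxHeartbeats 2000000 in
lemma step
    (hsp : ∀ Q : LeftComod k C, Injective Q → Indecomposable Q →
      FiniteDimensional k Q.V)
    (W : Submodule k C) (hW : IsSubcomod (Ccomod k C) W)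
    (IH : ∀ (W' : Submodule k C) (hW' : IsSubcomod (Ccomod k C) W'), W' < W →
      (∃ r' : Ccomod k C ⟶ sub (Ccomod k C) W' hW',
        subIncl (Ccomod k C) W' hW' ≫ r' = 𝟙 (sub (Ccomod k C) W' hW')) →
      FiniteDimensional k (↥W'))
    (r : Ccomod k C ⟶ sub (Ccomod k C) W hW)
    (hr : subIncl (Ccomod k C) W hW ≫ r = 𝟙 (sub (Ccomod k C) W hW)) :
    FiniteDimensional k (↥W) := by
  haveI hQinj : Injective (sub (Ccomod k C) W hW) :=
    injective_of_retract (subIncl (Ccomod k C) W hW) r hr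
  by_cases hnt : Nontrivial (sub (Ccomod k C) W hW).V
  · by_cases hind : ∀ e : sub (Ccomod k C) W hW ⟶ sub (Ccomod k C) W hW,
        e ≫ e = e → e = 𝟙 (sub (Ccomod k C) W hW) ∨ e.f = 0
    · exact hsp _ hQinj ⟨hnt, hind⟩
    · push_neg at hind
      obtain ⟨e, hee, hne1, hnef⟩ := hind
      have hee' : ∀ w, e.f (e.f w) = e.f w := fun w =>
        LinearMap.congr_fun (congrArg ComodHom.f hee) w
      have hri : ∀ w : (sub (Ccomod k C) W hW).V, r.f (W.subtype w) = w := fun w =>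
        LinearMap.congr_fun (congrArg ComodHom.f hr) w
      have he'f : ∀ w, (idSub e).f w = w - e.f w := fun w => rfl
      have he'e' : ∀ w, (idSub e).f ((idSub e).f w) = (idSub e).f w := by
        intro w
        rw [he'f, he'f, map_sub, hee' w]
        abel
      -- the two pieces
      have hW1 : IsSubcomod (Ccomod k C) (LinearMap.range ((e ≫ subIncl (Ccomod k C) W hW).f)) :=
        range_isSubcomod (e ≫ subIncl (Ccomod k C) W hW)
      have hW2 : IsSubcomod (Ccomod k C)
          (LinearMap.range ((idSub e ≫ subIncl (Ccomod k C) W hW).f)) :=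
        range_isSubcomod (idSub e ≫ subIncl (Ccomod k C) W hW)
      have hW1le : LinearMap.range ((e ≫ subIncl (Ccomod k C) W hW).f) ≤ W := by
        rintro c ⟨u, rfl⟩
        exact SetLike.coe_mem (e.f u : ↥W)
      have hW2le : LinearMap.range ((idSub e ≫ subIncl (Ccomod k C) W hW).f) ≤ W := by
        rintro c ⟨u, rfl⟩
        exact SetLike.coe_mem ((idSub e).f u : ↥W)
      have hW1ne : LinearMap.range ((e ≫ subIncl (Ccomod k C) W hW).f) ≠ W := by
        intro hEq
        apply hne1
        apply ComodHom.ext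
        apply LinearMap.ext
        intro v
        show e.f v = v
        have hv : (W.subtype v : C) ∈ LinearMap.range ((e ≫ subIncl (Ccomod k C) W hW).f) := by
          rw [hEq]; exact SetLike.coe_mem (v : ↥W)
        obtain ⟨u, hu⟩ := hv
        have hu' : e.f u = v := Subtype.ext hu
        calc e.f v = e.f (e.f u) := by rw [hu']
          _ = e.f u := hee' u
          _ = v := hu'
      have hW2ne : LinearMap.range ((idSub e ≫ subIncl (Ccomod k C) W hW).f) ≠ W := by
        intro hEq
        apply hnef
        apply LinearMap.ext
        intro v
        show e.f v = 0
        have hv : (W.subtype v : C) ∈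
            LinearMap.range ((idSub e ≫ subIncl (Ccomod k C) W hW).f) := by
          rw [hEq]; exact SetLike.coe_mem (v : ↥W)
        obtain ⟨u, hu⟩ := hv
        have hu' : (idSub e).f u = v := Subtype.ext hu
        calc e.f v = e.f ((idSub e).f u) := by rw [hu']
          _ = e.f u - e.f (e.f u) := by rw [he'f, map_sub]
          _ = 0 := by rw [hee' u, sub_self]
      -- retraction onto W1
      have hle1 : LinearMap.range ((r ≫ e ≫ subIncl (Ccomod k C) W hW).f) ≤
          LinearMap.range ((e ≫ subIncl (Ccomod k C) W hW).f) := by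
        rintro c ⟨u, rfl⟩
        exact ⟨r.f u, rfl⟩
      have hfix1 : ∀ c ∈ LinearMap.range ((e ≫ subIncl (Ccomod k C) W hW).f),
          (r ≫ e ≫ subIncl (Ccomod k C) W hW).f c = c := by
        rintro c ⟨u, rfl⟩
        show W.subtype (e.f (r.f (W.subtype (e.f u)))) = W.subtype (e.f u)
        rw [hri (e.f u), hee' u]
      have hr1 : subIncl (Ccomod k C) _ hW1 ≫
          corestrict (r ≫ e ≫ subIncl (Ccomod k C) W hW) _ hW1 hle1 =
          𝟙 (sub (Ccomod k C) _ hW1) := by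
        apply ComodHom.ext
        apply LinearMap.ext
        intro x
        apply Subtype.ext
        show (r ≫ e ≫ subIncl (Ccomod k C) W hW).f
          ((LinearMap.range ((e ≫ subIncl (Ccomod k C) W hW).f)).subtype x) =
          (LinearMap.range ((e ≫ subIncl (Ccomod k C) W hW).f)).subtype x
        exact hfix1 _ (SetLike.coe_mem (x : ↥(LinearMap.range ((e ≫ subIncl (Ccomod k C) W hW).f))))
      have hle2 : LinearMap.range ((r ≫ idSub e ≫ subIncl (Ccomod k C) W hW).f) ≤
          LinearMap.range ((idSub e ≫ subIncl (Ccomod k C) W hW).f) := by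
        rintro c ⟨u, rfl⟩
        exact ⟨r.f u, rfl⟩
      have hfix2 : ∀ c ∈ LinearMap.range ((idSub e ≫ subIncl (Ccomod k C) W hW).f),
          (r ≫ idSub e ≫ subIncl (Ccomod k C) W hW).f c = c := by
        rintro c ⟨u, rfl⟩
        show W.subtype ((idSub e).f (r.f (W.subtype ((idSub e).f u)))) =
          W.subtype ((idSub e).f u)
        rw [hri ((idSub e).f u), he'e' u]
      have hr2 : subIncl (Ccomod k C) _ hW2 ≫
          corestrict (r ≫ idSub e ≫ subIncl (Ccomod k C) W hW) _ hW2 hle2 =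
          𝟙 (sub (Ccomod k C) _ hW2) := by
        apply ComodHom.ext
        apply LinearMap.ext
        intro x
        apply Subtype.ext
        show (r ≫ idSub e ≫ subIncl (Ccomod k C) W hW).f
          ((LinearMap.range ((idSub e ≫ subIncl (Ccomod k C) W hW).f)).subtype x) =
          (LinearMap.range ((idSub e ≫ subIncl (Ccomod k C) W hW).f)).subtype x
        exact hfix2 _
          (SetLike.coe_mem (x : ↥(LinearMap.range ((idSub e ≫ subIncl (Ccomod k C) W hW).f))))
      -- induction hypotheses
      haveI hfd1 := IH _ hW1 (lt_of_le_of_ne hW1le hW1ne) ⟨_, hr1⟩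
      haveI hfd2 := IH _ hW2 (lt_of_le_of_ne hW2le hW2ne) ⟨_, hr2⟩
      -- conclude
      have hsup : W ≤ LinearMap.range ((e ≫ subIncl (Ccomod k C) W hW).f) ⊔
          LinearMap.range ((idSub e ≫ subIncl (Ccomod k C) W hW).f) := by
        intro v hv
        have hdecomp : v = W.subtype (e.f ⟨v, hv⟩) + W.subtype ((idSub e).f ⟨v, hv⟩) := by
          erw [he'f, map_sub]
          simp
        rw [hdecomp]
        exact Submodule.add_mem_sup (M := (Ccomod k C).V) ⟨⟨v, hv⟩, rfl⟩ ⟨⟨v, hv⟩, rfl⟩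
      have fg1 : (LinearMap.range ((e ≫ subIncl (Ccomod k C) W hW).f)).FG :=
        (Submodule.fg_iff_finiteDimensional _).mpr hfd1
      have fg2 : (LinearMap.range ((idSub e ≫ subIncl (Ccomod k C) W hW).f)).FG :=
        (Submodule.fg_iff_finiteDimensional _).mpr hfd2
      have hEq : LinearMap.range ((e ≫ subIncl (Ccomod k C) W hW).f) ⊔
          LinearMap.range ((idSub e ≫ subIncl (Ccomod k C) W hW).f) = W :=
        le_antisymm (sup_le hW1le hW2le) hsup
      have fgW : W.FG := hEq ▸ (fg1.sup fg2)
      exact (Submodule.fg_iff_finiteDimensional W).mp fgW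
  · haveI : Subsingleton (↥W) := not_nontrivial_iff_subsingleton.mp hnt
    exact Module.Finite.of_basis (Module.Basis.empty _ : Module.Basis (Fin 0) k (↥W))

lemma summand_finiteDimensional
    (hart : ∀ f : ℕ → Submodule k C, (∀ n, IsLeftSubcomoduleOfC k C (f n)) →
      (∀ n, f (n + 1) ≤ f n) → ∃ N, ∀ m, N ≤ m → f m = f N)
    (hsp : ∀ Q : LeftComod k C, Injective Q → Indecomposable Q →
      FiniteDimensional k Q.V)
    (s : SubcomodC k C) :
    (∃ r : Ccomod k C ⟶ sub (Ccomod k C) s.1 s.2,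
      subIncl (Ccomod k C) s.1 s.2 ≫ r = 𝟙 (sub (Ccomod k C) s.1 s.2)) →
    FiniteDimensional k (↥s.1) := by
  refine (wf_subcomod hart).induction
    (C := fun s => (∃ r : Ccomod k C ⟶ sub (Ccomod k C) s.1 s.2,
      subIncl (Ccomod k C) s.1 s.2 ≫ r = 𝟙 (sub (Ccomod k C) s.1 s.2)) →
      FiniteDimensional k (↥s.1)) s ?_
  clear s
  rintro ⟨W, hW⟩ IH ⟨r, hr⟩
  exact step hsp W hW
    (fun W' hW' hlt hEx' => IH ⟨W', hW'⟩ (Subtype.mk_lt_mk.mpr hlt) hEx') r hr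

lemma top_isSubcomod : IsSubcomod (Ccomod k C) (⊤ : Submodule k C) := by
  have h := range_isSubcomod (𝟙 (Ccomod k C))
  rwa [id_f, LinearMap.range_id] at h

end Statement19

open Statement19

/-- a coalgebra `C` over a field which is left artinian (DCC on left
subcomodules of `C`) and right semiperfect (every indecomposable injective left
`C`-comodule is finite dimensional) is finite dimensional. -/
theorem statement19
    (hart : ∀ f : ℕ → Submodule k C, (∀ n, IsLeftSubcomoduleOfC k C (f n)) →
      (∀ n, f (n + 1) ≤ f n) → ∃ N, ∀ m, N ≤ m → f m = f N)
    (hsp : ∀ Q : LeftComod k C, Injective Q → Indecomposable Q →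
      FiniteDimensional k Q.V) :
    FiniteDimensional k C := by
  have hle : LinearMap.range ((𝟙 (Ccomod k C) : Ccomod k C ⟶ Ccomod k C).f) ≤
      (⊤ : Submodule k C) := le_top
  have hret : subIncl (Ccomod k C) ⊤ top_isSubcomod ≫
      corestrict (𝟙 (Ccomod k C)) ⊤ top_isSubcomod hle = 𝟙 (sub (Ccomod k C) ⊤ top_isSubcomod) := by
    apply ComodHom.ext
    apply LinearMap.ext
    intro x
    apply Subtype.ext
    rfl
  haveI hfd : FiniteDimensional k (↥(⊤ : Submodule k C)) :=
    summand_finiteDimensional hart hsp ⟨⊤, top_isSubcomod⟩ ⟨_, hret⟩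
  exact Module.Finite.equiv (Submodule.topEquiv (R := k) (M := C))
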